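/- Let c ∈ ℝ^s have pairwise distinct entries and let S1, S2 be s×s real matrices satisfying S1 V1 = (I − S2) V0. Then the extrapolation is exact on polynomials of degree at most s−1: for every real polynomial φ with deg φ ≤ s−1, every Δt > 0 and every n, φ(t_{n,i}) = Σ_{j=1}^s (S1)_{ij} φ(t_{n−1,j}) + Σ_{j=1}^s (S2)_{ij} φ(t_{n,j}) for all i = 1,…,s, where t_{n,i} = nΔt + c_i Δt. -/
import Mathlib


open Finset

/-- If `S1 V1 = (I - S2) V0`, then the extrapolation is exact on polynomials
of degree at most `s-1`. -/
theorem stmt_4 (s : ℕ) (hs : 1 ≤ s)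
    (c : Fin s → ℝ) (hc : Function.Injective c)
    (S1 S2 V0 V1 : Matrix (Fin s) (Fin s) ℝ)
    (hV0 : ∀ i j, V0 i j = c i ^ (j : ℕ))
    (hV1 : ∀ i j, V1 i j = (c i - 1) ^ (j : ℕ))
    (hext : S1 * V1 = (1 - S2) * V0) :
    ∀ φ : Polynomial ℝ, φ.natDegree ≤ s - 1 → ∀ Δt : ℝ, 0 < Δt → ∀ n : ℕ, ∀ i : Fin s,
      φ.eval ((n : ℝ) * Δt + c i * Δt) =
        (∑ j, S1 i j * φ.eval ((n : ℝ) * Δt - Δt + c j * Δt)) +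
          ∑ j, S2 i j * φ.eval ((n : ℝ) * Δt + c j * Δt) := by
  intro φ hφ Δt hΔt n i
  -- entrywise matrix identity
  have hmat : ∀ (i : Fin s) (k : ℕ), k < s →
      (∑ j, S1 i j * (c j - 1) ^ k) + ∑ j, S2 i j * c j ^ k = c i ^ k := by
    intro i k hk
    have h := congrFun (congrFun hext i) ⟨k, hk⟩
    rw [Matrix.mul_apply, Matrix.sub_mul, Matrix.one_mul, Matrix.sub_apply,
      Matrix.mul_apply] at h
    simp only [hV0, hV1] at h
    linarith [h]
  -- general exactness for polynomials of degree < s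
  have key : ∀ p : Polynomial ℝ, p.natDegree < s → ∀ i : Fin s,
      p.eval (c i) = (∑ j, S1 i j * p.eval (c j - 1)) + ∑ j, S2 i j * p.eval (c j) := by
    intro p hp i
    have he : ∀ x : ℝ, p.eval x = ∑ k ∈ Finset.range s, p.coeff k * x ^ k := fun x =>
      Polynomial.eval_eq_sum_range' hp x
    simp only [he, Finset.mul_sum]
    rw [Finset.sum_comm, Finset.sum_comm (s := Finset.univ)]
    rw [← Finset.sum_add_distrib]
    refine Finset.sum_congr rfl fun k hk => ?_
    have hk' := Finset.mem_range.mp hk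
    have := hmat i k hk'
    calc p.coeff k * c i ^ k
        = p.coeff k * ((∑ j, S1 i j * (c j - 1) ^ k) + ∑ j, S2 i j * c j ^ k) := by rw [this]
      _ = (∑ j, S1 i j * (p.coeff k * (c j - 1) ^ k))
          + ∑ j, S2 i j * (p.coeff k * c j ^ k) := by
          rw [mul_add, Finset.mul_sum, Finset.mul_sum]
          congr 1 <;> exact Finset.sum_congr rfl fun j _ => by ring
  -- the shifted polynomial
  set ψ : Polynomial ℝ := φ.comp (Polynomial.C Δt * Polynomial.X + Polynomial.C ((n : ℝ) * Δt))
    with hψ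
  have hψdeg : ψ.natDegree < s := by
    rw [hψ, Polynomial.natDegree_comp, Polynomial.natDegree_linear (ne_of_gt hΔt), mul_one]
    omega
  have hψeval : ∀ x : ℝ, ψ.eval x = φ.eval (Δt * x + (n : ℝ) * Δt) := by
    intro x; simp [hψ]
  have h := key ψ hψdeg i
  rw [hψeval] at h
  simp only [hψeval] at h
  have e1 : Δt * c i + (n : ℝ) * Δt = (n : ℝ) * Δt + c i * Δt := by ring
  rw [e1] at h
  rw [h]
  congr 1
  · refine Finset.sum_congr rfl fun j _ => ?_
    congr 1; ring_nf
  · refine Finset.sum_congr rfl fun j _ => ?_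
    congr 1; ring_nf
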